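/- Let m > 0 and define Ω : ℂ → ℂ by Ω(w) = exp(−2 cosh(2π² w / m)). Then for every w ∈ S_m, writing w = u + iv with u, v ∈ ℝ, one has |Ω(w)| = exp(−2 · cos(2π² v / m) · cosh(2π² u / m)), and cos(2π² v / m) > 0. Consequently, for each fixed w ∈ S_m there exist β > 0 and C > 0 such that |Ω(w + j)| ≤ C · exp(−β · e^{(2π²/m)|j|}) for all j ∈ ℤ. -/

import Mathlib

noncomputable section

/-- The horizontal strip `S_m = {w : |Im w| < m/(4π)}`. -/
def Sm (m : ℝ) : Set ℂ := {w : ℂ | |w.im| < m / (4 * Real.pi)}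

/-- The set `(ℂ*)^d` of vectors with all coordinates nonzero. -/
def torusPart (d : ℕ) : Set (Fin d → ℂ) := {z | ∀ i, z i ≠ 0}

/-- The multiplicative action of an integer matrix on `(ℂ*)^d`:
`φ_M(z)_i = ∏_j z_j ^ M_{ij}`. -/
def phiM {d : ℕ} (M : Matrix (Fin d) (Fin d) ℤ) (z : Fin d → ℂ) : Fin d → ℂ :=
  fun i => ∏ j, z j ^ (M i j)

/-- The monomial `z^k = ∏_i z_i ^ k_i` for a row vector `k ∈ ℤ^d`. -/
def zpowVec {d : ℕ} (z : Fin d → ℂ) (k : Fin d → ℤ) : ℂ := ∏ i, z i ^ (k i)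

/-- `lam` is a complex eigenvalue of the integer matrix `M`. -/
def IsEig {d : ℕ} (M : Matrix (Fin d) (Fin d) ℤ) (lam : ℂ) : Prop :=
  ((M.map (Int.cast : ℤ → ℂ)).charpoly).IsRoot lam

/-- `ρ(M)`: the max over complex eigenvalues `λ` of `M` of `max |λ| |λ|⁻¹`,
i.e. the max of the spectral radii of `M` and `M⁻¹`. -/
def rhoM {d : ℕ} (M : Matrix (Fin d) (Fin d) ℤ) : ℝ :=
  sSup {r : ℝ | ∃ lam : ℂ, IsEig M lam ∧ r = max (‖lam‖) (‖lam‖)⁻¹}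

/-- A Reinhardt domain: a nonempty connected open set stable under coordinatewise
rotations. -/
def IsReinhardt {d : ℕ} (D : Set (Fin d → ℂ)) : Prop :=
  IsOpen D ∧ IsConnected D ∧
    ∀ z ∈ D, ∀ θ : Fin d → ℝ,
      (fun i => Complex.exp ((θ i : ℂ) * Complex.I) * z i) ∈ D

/-- A set `J ⊆ ℤ` has bounded gaps (not bigger than some `l`). -/
def BddGaps (J : Set ℤ) : Prop :=
  ∃ l : ℕ, ∀ j ∈ J, ∃ j' ∈ J, j' ≠ j ∧ |j - j'| ≤ (l : ℤ)

/-- Properties of `Ω(w) = exp(−2 cosh(2π² w / m))` on the strip `S_m`: the formula for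
`|Ω(w)|`, positivity of the cosine factor, and the resulting doubly exponential decay of
`|Ω(w+j)|` as `|j| → ∞`. -/
theorem stmt_13 (m : ℝ) (hm : 0 < m) (Ω : ℂ → ℂ)
    (hΩ : ∀ w : ℂ, Ω w = Complex.exp (-2 * Complex.cosh
      ((2 * (Real.pi : ℂ) ^ 2) * w / (m : ℂ)))) :
    (∀ w ∈ Sm m,
      ‖Ω w‖ = Real.exp (-2 * Real.cos (2 * Real.pi ^ 2 * w.im / m)
          * Real.cosh (2 * Real.pi ^ 2 * w.re / m)) ∧
      0 < Real.cos (2 * Real.pi ^ 2 * w.im / m)) ∧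
    (∀ w ∈ Sm m, ∃ β > (0 : ℝ), ∃ C > (0 : ℝ), ∀ j : ℤ,
      ‖Ω (w + (j : ℂ))‖
        ≤ C * Real.exp (-β * Real.exp ((2 * Real.pi ^ 2 / m) * |(j : ℝ)|))) := by

  have hπ := Real.pi_pos
  set t : ℝ := 2 * Real.pi ^ 2 / m with ht
  have ht0 : 0 < t := by positivity
  have hre : ∀ w : ℂ, ((2 * (Real.pi : ℂ) ^ 2) * w / (m : ℂ)) = ((t : ℝ) : ℂ) * w := by
    intro w
    rw [ht]
    push_cast
    rw [mul_div_right_comm]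
  have habs : ∀ w : ℂ, ‖Ω w‖
      = Real.exp (-2 * (Real.cos (t * w.im) * Real.cosh (t * w.re))) := by
    intro w
    rw [hΩ, hre, Complex.norm_exp]
    have hcoshre : ∀ z : ℂ, (Complex.cosh z).re = Real.cosh z.re * Real.cos z.im := by
      intro z
      have h2 : (2 : ℂ) * Complex.cosh z = Complex.exp z + Complex.exp (-z) :=
        Complex.two_cosh z
      have h3 : (Complex.exp z + Complex.exp (-z)).re
          = 2 * (Real.cosh z.re * Real.cos z.im) := by
        simp [Complex.exp_re, Complex.neg_re, Complex.neg_im, Real.cos_neg,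
          Real.cosh_eq]
        ring
      have h4 : ((2 : ℂ) * Complex.cosh z).re = 2 * (Complex.cosh z).re := by
        simp [Complex.mul_re]
      rw [h2, h3] at h4
      linarith
    congr 1
    simp only [Complex.mul_re, Complex.neg_re, Complex.neg_im, Complex.mul_im,
      Complex.ofReal_re, Complex.ofReal_im]
    rw [hcoshre]
    simp only [Complex.mul_re, Complex.mul_im, Complex.ofReal_re, Complex.ofReal_im]
    norm_num
    ring
  have hcos : ∀ v : ℝ, |v| < m / (4 * Real.pi) → 0 < Real.cos (t * v) := by
    intro v hv
    apply Real.cos_pos_of_mem_Ioo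
    have h1 : |t * v| < Real.pi / 2 := by
      rw [abs_mul, abs_of_pos ht0]
      calc t * |v| < t * (m / (4 * Real.pi)) := by
            exact (mul_lt_mul_iff_right₀ ht0).mpr hv
        _ = Real.pi / 2 := by
            rw [ht]; field_simp; ring
    constructor
    · linarith [neg_abs_le (t * v)]
    · linarith [le_abs_self (t * v)]
  have hexpabs : ∀ x : ℝ, Real.exp |x| ≤ 2 * Real.cosh x := by
    intro x
    rw [Real.cosh_eq]
    rcases abs_cases x with ⟨h1, _⟩ | ⟨h1, _⟩ <;> rw [h1] <;>
      nlinarith [Real.exp_pos x, Real.exp_pos (-x)]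
  constructor
  · intro w hw
    have h1 : 2 * Real.pi ^ 2 * w.im / m = t * w.im := by rw [ht]; ring
    have h2 : 2 * Real.pi ^ 2 * w.re / m = t * w.re := by rw [ht]; ring
    rw [h1, h2]
    exact ⟨by rw [habs]; ring_nf, hcos w.im hw⟩
  · intro w hw
    set c : ℝ := Real.cos (t * w.im) with hc
    have hc0 : 0 < c := hcos w.im hw
    refine ⟨c * Real.exp (-(t * |w.re|)), by positivity, 1, one_pos, fun j => ?_⟩
    rw [habs, one_mul]
    have him : (w + (j : ℂ)).im = w.im := by simp
    have hre2 : (w + (j : ℂ)).re = w.re + (j : ℝ) := by simp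
    rw [him, hre2, Real.exp_le_exp]
    rw [← hc]
    have key : c * Real.exp (-(t * |w.re|)) * Real.exp (t * |(j : ℝ)|)
        ≤ 2 * (c * Real.cosh (t * (w.re + (j : ℝ)))) := by
      rw [mul_assoc, ← Real.exp_add]
      have h3 : -(t * |w.re|) + t * |(j : ℝ)| ≤ |t * (w.re + (j : ℝ))| := by
        rw [abs_mul, abs_of_pos ht0]
        have : |(j : ℝ)| ≤ |w.re + (j : ℝ)| + |w.re| := by
          calc |(j : ℝ)| = |(w.re + (j : ℝ)) + (-w.re)| := by ring_nf
            _ ≤ |w.re + (j : ℝ)| + |(-w.re)| := abs_add_le _ _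
            _ = |w.re + (j : ℝ)| + |w.re| := by rw [abs_neg]
        nlinarith
      calc c * Real.exp (-(t * |w.re|) + t * |(j : ℝ)|)
          ≤ c * Real.exp |t * (w.re + (j : ℝ))| := by
            exact mul_le_mul_of_nonneg_left (Real.exp_le_exp.mpr h3) hc0.le
        _ ≤ c * (2 * Real.cosh (t * (w.re + (j : ℝ)))) := by
            exact mul_le_mul_of_nonneg_left (hexpabs _) hc0.le
        _ = 2 * (c * Real.cosh (t * (w.re + (j : ℝ)))) := by ring
    nlinarith [key]
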